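/- (Scalar LQR verification.) Let a, b ∈ ℝ, q ≥ 0, p₀ ≥ 0, T > 0, x₀ ∈ ℝ, and let M : [0,T] → ℝ be differentiable with Ṁ_t = 2a M_t − b² M_t² + q and M_0 = p₀. Then: (i) for every differentiable x : [0,T] → ℝ and continuous u : [0,T] → ℝ with ẋ_t = a x_t + b u_t and x_0 = x₀, the cost J(u) = ∫₀^T (q x_t² + u_t²) dt + p₀ x_T² satisfies J(u) ≥ M_T x₀²; and (ii) if moreover u_t = −b M_{T−t} x_t for all t ∈ [0,T], then J(u) = M_T x₀². Hence the feedback law u_t = −b M_{T−t} x_t is optimal with optimal cost M_T x₀². -/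

import Mathlib

open Set intervalIntegral

lemma lqr_key (a b q T : ℝ) (hT : 0 ≤ T) (M x u : ℝ → ℝ)
    (hM : ∀ t ∈ Set.Icc (0:ℝ) T,
      HasDerivAt M (2 * a * M t - b ^ 2 * (M t) ^ 2 + q) t)
    (hx : ∀ t ∈ Set.Icc (0:ℝ) T, HasDerivAt x (a * x t + b * u t) t)
    (hu : ContinuousOn u (Set.Icc 0 T)) :
    (∫ t in (0:ℝ)..T, (q * (x t) ^ 2 + (u t) ^ 2))
      = M T * (x 0) ^ 2 - M 0 * (x T) ^ 2
        + ∫ t in (0:ℝ)..T, (u t + b * M (T - t) * x t) ^ 2 := by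
  have hIcc : Set.uIcc (0:ℝ) T = Set.Icc 0 T := Set.uIcc_of_le hT
  have hmap : ∀ t ∈ Set.Icc (0:ℝ) T, T - t ∈ Set.Icc (0:ℝ) T := by
    intro t ht
    exact ⟨by linarith [ht.2], by linarith [ht.1]⟩
  set F : ℝ → ℝ := fun t =>
    -(2 * a * M (T - t) - b ^ 2 * (M (T - t)) ^ 2 + q) * (x t) ^ 2
      + M (T - t) * (2 * x t * (a * x t + b * u t)) with hF
  have hN : ∀ t ∈ Set.Icc (0:ℝ) T,
      HasDerivAt (fun s => M (T - s))
        (-(2 * a * M (T - t) - b ^ 2 * (M (T - t)) ^ 2 + q)) t := by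
    intro t ht
    have h1 : HasDerivAt (fun s : ℝ => T - s) (-1) t := by
      simpa using (hasDerivAt_id t).const_sub T
    have := (hM (T - t) (hmap t ht)).comp t h1
    refine this.congr_deriv ?_
    ring
  have hV : ∀ t ∈ Set.Icc (0:ℝ) T,
      HasDerivAt (fun s => M (T - s) * (x s) ^ 2) (F t) t := by
    intro t ht
    have h2 : HasDerivAt (fun s => (x s) ^ 2)
        (2 * x t ^ 1 * (a * x t + b * u t)) t := (hx t ht).pow 2
    have := (hN t ht).mul h2
    refine this.congr_deriv ?_
    simp [hF]
  have hxC : ContinuousOn x (Set.Icc 0 T) := fun t ht =>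
    (hx t ht).continuousAt.continuousWithinAt
  have hMC : ContinuousOn M (Set.Icc 0 T) := fun t ht =>
    (hM t ht).continuousAt.continuousWithinAt
  have hNC : ContinuousOn (fun t => M (T - t)) (Set.Icc 0 T) :=
    hMC.comp ((continuous_const.sub continuous_id).continuousOn) hmap
  have hFC : ContinuousOn F (Set.Icc 0 T) := by
    apply ContinuousOn.add
    · exact ((continuousOn_const.mul hNC).sub
        (continuousOn_const.mul (hNC.pow 2)) |>.add continuousOn_const).neg.mul
        (hxC.pow 2)
    · exact hNC.mul ((continuousOn_const.mul hxC).mul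
        ((continuousOn_const.mul hxC).add (continuousOn_const.mul hu)))
  have hgC : ContinuousOn (fun t => (u t + b * M (T - t) * x t) ^ 2) (Set.Icc 0 T) :=
    (hu.add ((continuousOn_const.mul hNC).mul hxC)).pow 2
  have hFI : IntervalIntegrable F MeasureTheory.volume 0 T :=
    (hFC.mono (by rw [hIcc])).intervalIntegrable
  have hgI : IntervalIntegrable (fun t => (u t + b * M (T - t) * x t) ^ 2)
      MeasureTheory.volume 0 T :=
    (hgC.mono (by rw [hIcc])).intervalIntegrable
  have hFTC : ∫ t in (0:ℝ)..T, F t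
      = M (T - T) * (x T) ^ 2 - M (T - 0) * (x 0) ^ 2 := by
    exact intervalIntegral.integral_eq_sub_of_hasDerivAt
      (fun t ht => hV t (hIcc ▸ ht)) hFI
  have heq : Set.EqOn (fun t => q * (x t) ^ 2 + (u t) ^ 2)
      (fun t => (u t + b * M (T - t) * x t) ^ 2 - F t) (Set.uIcc 0 T) := by
    intro t _
    simp only [hF]
    ring
  rw [intervalIntegral.integral_congr heq, intervalIntegral.integral_sub hgI hFI, hFTC]
  simp
  ring

theorem scalar_lqr_verification
    (a b q p₀ T x₀ : ℝ) (hq : 0 ≤ q) (hp₀ : 0 ≤ p₀) (hT : 0 < T)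
    (M : ℝ → ℝ)
    (hM : ∀ t ∈ Set.Icc (0:ℝ) T,
      HasDerivAt M (2 * a * M t - b ^ 2 * (M t) ^ 2 + q) t)
    (hM0 : M 0 = p₀) :
    (∀ x u : ℝ → ℝ,
      (∀ t ∈ Set.Icc (0:ℝ) T, HasDerivAt x (a * x t + b * u t) t) →
      x 0 = x₀ → ContinuousOn u (Set.Icc 0 T) →
      M T * x₀ ^ 2 ≤ (∫ t in (0:ℝ)..T, (q * (x t) ^ 2 + (u t) ^ 2)) + p₀ * (x T) ^ 2) ∧
    (∀ x u : ℝ → ℝ,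
      (∀ t ∈ Set.Icc (0:ℝ) T, HasDerivAt x (a * x t + b * u t) t) →
      x 0 = x₀ → ContinuousOn u (Set.Icc 0 T) →
      (∀ t ∈ Set.Icc (0:ℝ) T, u t = -b * M (T - t) * x t) →
      (∫ t in (0:ℝ)..T, (q * (x t) ^ 2 + (u t) ^ 2)) + p₀ * (x T) ^ 2 = M T * x₀ ^ 2) := by
  constructor
  · intro x u hx hx0 hu
    have key := lqr_key a b q T hT.le M x u hM hx hu
    have hnn : (0:ℝ) ≤ ∫ t in (0:ℝ)..T, (u t + b * M (T - t) * x t) ^ 2 :=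
      intervalIntegral.integral_nonneg hT.le (fun t _ => sq_nonneg _)
    rw [key, hx0, hM0]
    linarith
  · intro x u hx hx0 hu hfb
    have key := lqr_key a b q T hT.le M x u hM hx hu
    have hz : (∫ t in (0:ℝ)..T, (u t + b * M (T - t) * x t) ^ 2) = 0 := by
      rw [intervalIntegral.integral_congr (g := fun _ => (0:ℝ))
        (fun t ht => by
          rw [Set.uIcc_of_le hT.le] at ht
          simp [hfb t ht])]
      simp
    rw [key, hz, hx0, hM0]
    ring
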